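/- Let X be a first countable topological space such that the closure in C_p(X) of every subset of C_p(X,[0,1]) that is countably compact in C_p(X) is compact (X is weakly Grothendieck). Then for A ⊆ C_p(X,[0,1]), A is relatively compact in C_p(X) if and only if for every pair of sequences ⟨fₙ⟩ in A and ⟨xₘ⟩ in X and all ultrafilters 𝒰, 𝒱 on ℕ, whenever lim_{m→𝒱} xₘ exists in X, the double ultralimits lim_{n→𝒰} lim_{m→𝒱} fₙ(xₘ) and lim_{m→𝒱} lim_{n→𝒰} fₙ(xₘ) are equal. -/

import Mathlib

open Filter Topology

/-- The space `C_p(X)` of continuous real-valued functions on `X` with the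
topology of pointwise convergence (inherited from the product topology). -/
def Cp (X : Type*) [TopologicalSpace X] : Type _ := {f : X → ℝ // Continuous f}

instance (X : Type*) [TopologicalSpace X] : TopologicalSpace (Cp X) :=
  instTopologicalSpaceSubtype

/-- `p` is a limit point of `S`. -/
def IsLimitPt {Y : Type*} [TopologicalSpace Y] (S : Set Y) (p : Y) : Prop :=
  p ∈ closure (S \ {p})

/-- `A` is countably compact in the ambient space `Y`: every infinite subset of `A`
has a limit point in `Y`. -/
def CountablyCompactIn {Y : Type*} [TopologicalSpace Y] (A : Set Y) : Prop :=
  ∀ S ⊆ A, S.Infinite → ∃ p : Y, IsLimitPt S p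

/-- in a first countable weakly Grothendieck space, relative compactness of
`A ⊆ C_p(X,[0,1])` in `C_p(X)` is equivalent to the double ultralimit condition. -/
theorem stmt_3 {X : Type*} [TopologicalSpace X] [FirstCountableTopology X]
    (hWG : ∀ B : Set (Cp X), (∀ f ∈ B, ∀ x, f.1 x ∈ Set.Icc (0:ℝ) 1) →
      CountablyCompactIn B → IsCompact (closure B))
    (A : Set (Cp X)) (hA : ∀ f ∈ A, ∀ x, f.1 x ∈ Set.Icc (0:ℝ) 1) :
    IsCompact (closure A) ↔
      ∀ f : ℕ → Cp X, (∀ n, f n ∈ A) → ∀ (x : ℕ → X) (𝒰 𝒱 : Ultrafilter ℕ) (y : X),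
        Tendsto x ↑𝒱 (𝓝 y) →
        ∀ (g h : ℕ → ℝ) (α β : ℝ),
          (∀ n, Tendsto (fun m => (f n).1 (x m)) ↑𝒱 (𝓝 (g n))) →
          Tendsto g ↑𝒰 (𝓝 α) →
          (∀ m, Tendsto (fun n => (f n).1 (x m)) ↑𝒰 (𝓝 (h m))) →
          Tendsto h ↑𝒱 (𝓝 β) →
          α = β := by
  constructor
  · intro hcomp f hf x 𝒰 𝒱 y hxy g h α β hg hgα hh hhβ
    have hmem : closure A ∈ Ultrafilter.map f 𝒰 :=
      Filter.mem_map.2 (Filter.univ_mem' fun n => subset_closure (hf n))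
    obtain ⟨F, -, hFle⟩ := hcomp.ultrafilter_le_nhds (𝒰.map f) (le_principal_iff.2 hmem)
    have htF : Tendsto f ↑𝒰 (𝓝 F) := hFle
    have hev : ∀ z, Tendsto (fun n => (f n).1 z) ↑𝒰 (𝓝 (F.1 z)) := by
      intro z
      have hc : Continuous (fun G : Cp X => G.1 z) :=
        (continuous_apply z).comp continuous_subtype_val
      exact ((hc.tendsto F).comp htF)
    have hg' : ∀ n, g n = (f n).1 y := fun n =>
      tendsto_nhds_unique (hg n) (((f n).2.tendsto y).comp hxy)
    have hα : α = F.1 y := by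
      refine tendsto_nhds_unique ?_ (hev y)
      have : g = fun n => (f n).1 y := funext hg'
      rwa [this] at hgα
    have hh' : ∀ m, h m = F.1 (x m) := fun m =>
      tendsto_nhds_unique (hh m) (hev (x m))
    have hβ : β = F.1 y := by
      refine tendsto_nhds_unique ?_ ((F.2.tendsto y).comp hxy)
      have : h = fun m => F.1 (x m) := funext hh'
      rwa [this] at hhβ
    rw [hα, hβ]
  · intro H
    apply hWG A hA
    intro S hSA hSinf
    obtain ⟨e⟩ : Nonempty (ℕ ↪ S) := ⟨hSinf.natEmbedding⟩
    set f : ℕ → Cp X := fun n => (e n : Cp X) with hfdef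
    have hfS : ∀ n, f n ∈ S := fun n => (e n).2
    have hfA : ∀ n, f n ∈ A := fun n => hSA (hfS n)
    have hfinj : Function.Injective f := fun a b hab =>
      e.injective (Subtype.val_injective hab)
    set 𝒰 : Ultrafilter ℕ := Ultrafilter.of atTop with h𝒰def
    have h𝒰le : (𝒰 : Filter ℕ) ≤ atTop := Ultrafilter.of_le _
    have key : ∀ z, ∃ c : ℝ, Tendsto (fun n => (f n).1 z) ↑𝒰 (𝓝 c) := by
      intro z
      obtain ⟨c, -, hc⟩ := isCompact_Icc.ultrafilter_le_nhds
        (𝒰.map fun n => (f n).1 z)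
        (le_principal_iff.2 (Filter.mem_map.2
          (Filter.univ_mem' fun n => hA (f n) (hfA n) z)))
      exact ⟨c, hc⟩
    choose F hF using key
    have hFIcc : ∀ z, F z ∈ Set.Icc (0:ℝ) 1 := fun z =>
      isClosed_Icc.mem_of_tendsto (hF z)
        (Filter.Eventually.of_forall fun n => hA (f n) (hfA n) z)
    have hFcont : Continuous F := by
      rw [continuous_iff_seqContinuous]
      intro x y hxy
      rw [tendsto_iff_ultrafilter]
      intro 𝒱 h𝒱
      obtain ⟨β, -, hβ⟩ := isCompact_Icc.ultrafilter_le_nhds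
        (𝒱.map fun m => F (x m))
        (le_principal_iff.2 (Filter.mem_map.2
          (Filter.univ_mem' fun m => hFIcc (x m))))
      have hx𝒱 : Tendsto x ↑𝒱 (𝓝 y) := hxy.mono_left h𝒱
      have heq : F y = β :=
        H f hfA x 𝒰 𝒱 y hx𝒱 (fun n => (f n).1 y) (fun m => F (x m)) (F y) β
          (fun n => ((f n).2.tendsto y).comp hx𝒱) (hF y)
          (fun m => hF (x m)) hβ
      rw [heq]
      exact hβ
    refine ⟨⟨F, hFcont⟩, ?_⟩
    have hfF : Tendsto f ↑𝒰 (𝓝 (⟨F, hFcont⟩ : Cp X)) := by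
      refine tendsto_subtype_rng.2 (tendsto_pi_nhds.2 ?_)
      exact hF
    have hevS : ∀ᶠ n in ↑𝒰, f n ∈ S \ {(⟨F, hFcont⟩ : Cp X)} := by
      have hsub : ({n | f n = (⟨F, hFcont⟩ : Cp X)} : Set ℕ).Subsingleton :=
        fun a ha b hb => hfinj (ha.trans hb.symm)
      have hcof : {n | f n = (⟨F, hFcont⟩ : Cp X)}ᶜ ∈ (cofinite : Filter ℕ) :=
        hsub.finite.compl_mem_cofinite
      rw [Nat.cofinite_eq_atTop] at hcof
      have hne : ∀ᶠ n in ↑𝒰, f n ≠ (⟨F, hFcont⟩ : Cp X) := h𝒰le hcof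
      filter_upwards [hne] with n hn
      exact ⟨hfS n, hn⟩
    exact mem_closure_of_tendsto hfF hevS
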